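/- arXiv:math/0311251 — 2 statements merged into one kernel-verified Lean document; each statement's English description precedes it below -/
import Mathlib

section
/- For every λ ∈ ℤ^N, every r ∈ ℤ/pℤ, and every 1 ≤ i ≤ N: i is the position of a − in the reduced r-signature σ̃_r(λ) if and only if there exists a ≥ 0 such that (ẽ*_r)^a(λ) ≠ 0 and (ẽ*_r)^{a+1}(λ) = (ẽ*_r)^a(λ) − ε_i, where ẽ*_r is extended by ẽ*_r(0) = 0 and (ẽ*_r)^0(λ) = λ. -/
namespace Kujawa

open Finset

variable {n : ℕ}

/-- The sign `(−1)^{p̄ i}` attached to the parity sequence `pb`. -/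
def sg (pb : Fin (n + 1) → ZMod 2) (i : Fin (n + 1)) : ℤ :=
  if pb i = 0 then 1 else -1

/-- `ϑ_j = ∑_{i > j} (−1)^{p̄_i + p̄_j}`. -/
def theta (pb : Fin (n + 1) → ZMod 2) (j : Fin (n + 1)) : ℤ :=
  ∑ i ∈ Finset.Ioi j, sg pb i * sg pb j

/-- The standard basis vector `ε_i` of `X(T) = ℤ^N`. -/
def eps (i : Fin (n + 1)) : Fin (n + 1) → ℤ := fun j => if j = i then 1 else 0

/-- The `j`-th residue `r_j(λ) = (λ + ϑ, ε_j)`. -/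
def res (pb : Fin (n + 1) → ZMod 2) (l : Fin (n + 1) → ℤ) (j : Fin (n + 1)) : ℤ :=
  sg pb j * (l j + theta pb j)

/-- `ρ = ϑ + ∑_{i : p̄_i = 0} ε_i`, coordinatewise. -/
def rho (pb : Fin (n + 1) → ZMod 2) (k : Fin (n + 1)) : ℤ :=
  theta pb k + (if pb k = 0 then 1 else 0)

/-- `l(λ) = ∑ λ_i`. -/
def ell (l : Fin (n + 1) → ℤ) : ℤ := ∑ i, l i

/-- The central character value `Z_r(λ)`. -/
def Zint (pb : Fin (n + 1) → ZMod 2) (r : ℕ) (l : Fin (n + 1) → ℤ) : ℤ :=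
  ∑ s ∈ Finset.Icc 1 r, (-1 : ℤ) ^ (s - 1) *
    ∑ K ∈ Finset.powersetCard s (Finset.univ : Finset (Fin (n + 1))),
      ∑ a ∈ Fintype.piFinset (fun _ : Fin (n + 1) => Finset.range (r + 2)),
        if (∑ k ∈ K, a k) = r - s + 1 ∧ (∀ k, k ∉ K → a k = 0) then
          (∏ k ∈ K, sg pb k) * ∏ k ∈ K, res pb l k ^ a k
        else 0

/-- `A_r(λ) = #{i : r_i(λ+ε_i) ≡ r (mod p)}`. -/
def Acount (pb : Fin (n + 1) → ZMod 2) (p : ℕ) (r : ZMod p) (l : Fin (n + 1) → ℤ) : ℕ :=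
  (Finset.univ.filter fun i : Fin (n + 1) => ((res pb (l + eps i) i : ℤ) : ZMod p) = r).card

/-- `B_r(λ) = #{i : r_i(λ) ≡ r (mod p)}`. -/
def Bcount (pb : Fin (n + 1) → ZMod 2) (p : ℕ) (r : ZMod p) (l : Fin (n + 1) → ℤ) : ℕ :=
  (Finset.univ.filter fun i : Fin (n + 1) => ((res pb l i : ℤ) : ZMod p) = r).card

/-- For `p = 0`: `γ_a` is the basis element `single a 1` of the free module `ℤ →₀ ℤ`. -/
noncomputable def gamma0 (a : ℤ) : ℤ →₀ ℤ := Finsupp.single a 1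

/-- `wt` for `p = 0`, with values in the free `ℤ`-module on basis `{γ_a : a ∈ ℤ}`. -/
noncomputable def wt0 (pb : Fin (n + 1) → ZMod 2) (l : Fin (n + 1) → ℤ) : ℤ →₀ ℤ :=
  ∑ i : Fin (n + 1), sg pb i • gamma0 (sg pb i * (l i + rho pb i))

/-- `Λ_r ∈ P = ℤδ ⊕ ⊕_{r ∈ ℤ/pℤ} ℤΛ_r`. -/
def LamP (p : ℕ) (r : ZMod p) : ℤ × (ZMod p → ℤ) := (0, fun s => if s = r then 1 else 0)

/-- `δ ∈ P`. -/
def delP (p : ℕ) : ℤ × (ZMod p → ℤ) := (1, 0)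

/-- `γ_a = Λ_{s mod p} − Λ_{(s−1) mod p} − d·δ`, where `a = p·d + s` with `1 ≤ s ≤ p`. -/
def gammaP (p : ℕ) (a : ℤ) : ℤ × (ZMod p → ℤ) :=
  LamP p (((a - 1) % (p : ℤ) + 1 : ℤ) : ZMod p) - LamP p (((a - 1) % (p : ℤ) : ℤ) : ZMod p) -
    ((a - 1) / (p : ℤ)) • delP p

/-- `wt` for prime `p`. -/
def wtP (p : ℕ) (pb : Fin (n + 1) → ZMod 2) (l : Fin (n + 1) → ℤ) : ℤ × (ZMod p → ℤ) :=
  ∑ i : Fin (n + 1), sg pb i • gammaP p (sg pb i * (l i + rho pb i))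

/-- Entry `i` of the `r`-signature of `λ`: `1` codes `+`, `-1` codes `−`, `0` codes `0`. -/
def sig (pb : Fin (n + 1) → ZMod 2) (p : ℕ) (r : ZMod p) (l : Fin (n + 1) → ℤ)
    (i : Fin (n + 1)) : ℤ :=
  if ((res pb (l + eps i) i : ℤ) : ZMod p) = r then 1
  else if ((res pb l i : ℤ) : ZMod p) = r then -1
  else 0

/-- Number of `−`'s of the `r`-signature of `λ` in positions `[i..j]`. -/
noncomputable def nM (pb : Fin (n + 1) → ZMod 2) (p : ℕ) (r : ZMod p) (l : Fin (n + 1) → ℤ)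
    (i j : Fin (n + 1)) : ℕ :=
  Set.ncard {k : Fin (n + 1) | k ∈ Finset.Icc i j ∧ sig pb p r l k = -1}

/-- Number of `+`'s of the `r`-signature of `λ` in positions `[i..j]`. -/
noncomputable def nP (pb : Fin (n + 1) → ZMod 2) (p : ℕ) (r : ZMod p) (l : Fin (n + 1) → ℤ)
    (i j : Fin (n + 1)) : ℕ :=
  Set.ncard {k : Fin (n + 1) | k ∈ Finset.Icc i j ∧ sig pb p r l k = 1}

/-- `i` is the position of a `−` in the reduced `r`-signature of `λ` (i.e. `i` is
`r`-normal for `λ`): the `−` at `i` is never cancelled, which happens exactly when every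
interval `[i..j]` contains strictly more `−`'s than `+`'s. -/
def RMinus (pb : Fin (n + 1) → ZMod 2) (p : ℕ) (r : ZMod p) (l : Fin (n + 1) → ℤ)
    (i : Fin (n + 1)) : Prop :=
  sig pb p r l i = -1 ∧ ∀ j : Fin (n + 1), i ≤ j → nP pb p r l i j < nM pb p r l i j

/-- `i` is the position of a `+` in the reduced `r`-signature of `λ` (i.e. `i` is
`r`-conormal for `λ`). -/
def RPlus (pb : Fin (n + 1) → ZMod 2) (p : ℕ) (r : ZMod p) (l : Fin (n + 1) → ℤ)
    (i : Fin (n + 1)) : Prop :=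
  sig pb p r l i = 1 ∧ ∀ j : Fin (n + 1), j ≤ i → nM pb p r l j i < nP pb p r l j i

/-- `i` is the position of the leftmost `−` in the reduced `r`-signature (`r`-good). -/
def RGood (pb : Fin (n + 1) → ZMod 2) (p : ℕ) (r : ZMod p) (l : Fin (n + 1) → ℤ)
    (i : Fin (n + 1)) : Prop :=
  RMinus pb p r l i ∧ ∀ j : Fin (n + 1), j < i → ¬ RMinus pb p r l j

/-- `i` is the position of the rightmost `+` in the reduced `r`-signature (`r`-cogood). -/
def RCogood (pb : Fin (n + 1) → ZMod 2) (p : ℕ) (r : ZMod p) (l : Fin (n + 1) → ℤ)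
    (i : Fin (n + 1)) : Prop :=
  RPlus pb p r l i ∧ ∀ j : Fin (n + 1), i < j → ¬ RPlus pb p r l j

open Classical in
/-- The crystal operator `ẽ*_r`, with `none` playing the role of `0`. -/
noncomputable def eStar (pb : Fin (n + 1) → ZMod 2) (p : ℕ) (r : ZMod p)
    (l : Fin (n + 1) → ℤ) : Option (Fin (n + 1) → ℤ) :=
  if h : (Finset.univ.filter (RMinus pb p r l)).Nonempty then
    some (l - eps ((Finset.univ.filter (RMinus pb p r l)).min' h))
  else none

open Classical in
/-- The crystal operator `f̃*_r`, with `none` playing the role of `0`. -/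
noncomputable def fStar (pb : Fin (n + 1) → ZMod 2) (p : ℕ) (r : ZMod p)
    (l : Fin (n + 1) → ℤ) : Option (Fin (n + 1) → ℤ) :=
  if h : (Finset.univ.filter (RPlus pb p r l)).Nonempty then
    some (l + eps ((Finset.univ.filter (RPlus pb p r l)).max' h))
  else none

/-- `A ↓ B`: there is an injection `θ : A → B` with `θ a ≤ a` for all `a ∈ A`. -/
def Down (A B : Finset (Fin (n + 1))) : Prop :=
  ∃ θ : Fin (n + 1) → Fin (n + 1), Set.InjOn θ ↑A ∧ ∀ a ∈ A, θ a ∈ B ∧ θ a ≤ a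

/-- `C_{i,j}(λ) = {h ∈ (i..j) : c_{i,h}(λ) ≡ 0 (mod p)}`. -/
def Cset (pb : Fin (n + 1) → ZMod 2) (p : ℕ) (l : Fin (n + 1) → ℤ) (i j : Fin (n + 1)) :
    Finset (Fin (n + 1)) :=
  (Finset.Ioo i j).filter fun h => ((res pb l i - res pb l h : ℤ) : ZMod p) = 0

/-- `B_{i,j}(λ) = {h ∈ [i..j) : b_{i,h}(λ) ≡ 0 (mod p)}`. -/
def Bset (pb : Fin (n + 1) → ZMod 2) (p : ℕ) (l : Fin (n + 1) → ℤ) (i j : Fin (n + 1)) :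
    Finset (Fin (n + 1)) :=
  (Finset.Ico i j).filter fun h =>
    ((res pb l i - res pb (l + eps (h + 1)) (h + 1) : ℤ) : ZMod p) = 0

/-- The opposite parity sequence `p̄′_k = p̄_{w₀ k} + 1̄`, where `w₀ k = N + 1 − k`. -/
def pbRev (pb : Fin (n + 1) → ZMod 2) : Fin (n + 1) → ZMod 2 := fun k => pb k.rev + 1

/-- `s̃ : ℤ^N → ℤ^N`, `(s̃ λ)_{w₀ i} = −λ_i`. -/
def stilde (l : Fin (n + 1) → ℤ) : Fin (n + 1) → ℤ := fun k => -l k.rev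

/-- `(i, j)` is an `r`-canceling pair for `λ` (for `i < j`). -/
def CPair (pb : Fin (n + 1) → ZMod 2) (p : ℕ) (r : ZMod p) (l : Fin (n + 1) → ℤ)
    (i j : Fin (n + 1)) : Prop :=
  sig pb p r l i = -1 ∧ sig pb p r l j = 1 ∧
    ∀ k : Fin (n + 1), i < k → k < j → sig pb p r l k = 0

/-- `(i i+1)·λ`: interchange coordinates `i` and `i+1`. -/
def swapL (i : Fin (n + 1)) (l : Fin (n + 1) → ℤ) : Fin (n + 1) → ℤ :=
  fun k => if k = i then l (i + 1) else if k = i + 1 then l i else l k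

/-- The parity sequence obtained from `pb` by interchanging entries `i` and `i+1`. -/
def pbSwap (pb : Fin (n + 1) → ZMod 2) (i : Fin (n + 1)) : Fin (n + 1) → ZMod 2 :=
  fun k => if k = i then pb (i + 1) else if k = i + 1 then pb i else pb k

/-- The odd reflection `s_i` on `X(T)`. -/
def sI (pb : Fin (n + 1) → ZMod 2) (p : ℕ) (i : Fin (n + 1)) (l : Fin (n + 1) → ℤ) :
    Fin (n + 1) → ℤ :=
  if ((sg pb i * l i - sg pb (i + 1) * l (i + 1) : ℤ) : ZMod p) = 0 then swapL i l
  else swapL i l + eps i - eps (i + 1)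


section Aux14

lemma res_congr' (pb : Fin (n + 1) → ZMod 2) (l l' : Fin (n + 1) → ℤ) (k : Fin (n + 1))
    (h : l k = l' k) : res pb l k = res pb l' k := by simp [res, h]

lemma sig_congr' (pb : Fin (n + 1) → ZMod 2) (p : ℕ) (r : ZMod p) (l l' : Fin (n + 1) → ℤ)
    (k : Fin (n + 1)) (h : l k = l' k) : sig pb p r l k = sig pb p r l' k := by
  have h1 : res pb (l + eps k) k = res pb (l' + eps k) k :=
    res_congr' pb _ _ _ (by simp [eps, h])
  have h2 : res pb l k = res pb l' k := res_congr' pb _ _ _ h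
  simp [sig, h1, h2]

lemma sig_sub_eps (pb : Fin (n + 1) → ZMod 2) (p : ℕ) (r : ZMod p) (l : Fin (n + 1) → ℤ)
    (j k : Fin (n + 1)) (hk : k ≠ j) : sig pb p r (l - eps j) k = sig pb p r l k :=
  sig_congr' pb p r _ _ k (by simp [eps, hk])

lemma sig_sub_eps_self (pb : Fin (n + 1) → ZMod 2) (p : ℕ) (r : ZMod p) (l : Fin (n + 1) → ℤ)
    (j : Fin (n + 1)) (h : sig pb p r l j = -1) : sig pb p r (l - eps j) j = 1 := by
  have hl : l - eps j + eps j = l := by abel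
  have h2 : ((res pb l j : ℤ) : ZMod p) = r := by
    unfold sig at h
    split_ifs at h with h1 h2
    exact h2
  unfold sig
  rw [hl, if_pos h2]

open Classical in
lemma nM_eq (pb : Fin (n + 1) → ZMod 2) (p : ℕ) (r : ZMod p) (l : Fin (n + 1) → ℤ)
    (a b : Fin (n + 1)) :
    nM pb p r l a b = ((Finset.Icc a b).filter fun k => sig pb p r l k = -1).card := by
  have hs : {k : Fin (n + 1) | k ∈ Finset.Icc a b ∧ sig pb p r l k = -1} =
      ↑((Finset.Icc a b).filter fun k => sig pb p r l k = -1) := by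
    ext k; simp
  rw [nM, hs, Set.ncard_coe_finset]

open Classical in
lemma nP_eq (pb : Fin (n + 1) → ZMod 2) (p : ℕ) (r : ZMod p) (l : Fin (n + 1) → ℤ)
    (a b : Fin (n + 1)) :
    nP pb p r l a b = ((Finset.Icc a b).filter fun k => sig pb p r l k = 1).card := by
  have hs : {k : Fin (n + 1) | k ∈ Finset.Icc a b ∧ sig pb p r l k = 1} =
      ↑((Finset.Icc a b).filter fun k => sig pb p r l k = 1) := by
    ext k; simp
  rw [nP, hs, Set.ncard_coe_finset]

lemma nM_sub_notMem (pb : Fin (n + 1) → ZMod 2) (p : ℕ) (r : ZMod p) (l : Fin (n + 1) → ℤ)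
    (j a b : Fin (n + 1)) (hj : j ∉ Finset.Icc a b) :
    nM pb p r (l - eps j) a b = nM pb p r l a b := by
  classical
  rw [nM_eq, nM_eq]
  congr 1
  apply Finset.filter_congr
  intro x hx
  have hne : x ≠ j := by rintro rfl; exact hj hx
  simp [sig_sub_eps pb p r l j x hne]

lemma nP_sub_notMem (pb : Fin (n + 1) → ZMod 2) (p : ℕ) (r : ZMod p) (l : Fin (n + 1) → ℤ)
    (j a b : Fin (n + 1)) (hj : j ∉ Finset.Icc a b) :
    nP pb p r (l - eps j) a b = nP pb p r l a b := by
  classical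
  rw [nP_eq, nP_eq]
  congr 1
  apply Finset.filter_congr
  intro x hx
  have hne : x ≠ j := by rintro rfl; exact hj hx
  simp [sig_sub_eps pb p r l j x hne]

lemma nM_sub_mem (pb : Fin (n + 1) → ZMod 2) (p : ℕ) (r : ZMod p) (l : Fin (n + 1) → ℤ)
    (j a b : Fin (n + 1)) (hj : sig pb p r l j = -1) (hmem : j ∈ Finset.Icc a b) :
    nM pb p r (l - eps j) a b + 1 = nM pb p r l a b := by
  classical
  rw [nM_eq, nM_eq]
  have hset : ((Finset.Icc a b).filter fun k => sig pb p r (l - eps j) k = -1) =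
      ((Finset.Icc a b).filter fun k => sig pb p r l k = -1).erase j := by
    ext k
    by_cases hk : k = j
    · subst hk
      simp [Finset.mem_filter, sig_sub_eps_self pb p r l k hj]
    · simp [Finset.mem_filter, Finset.mem_erase, hk, sig_sub_eps pb p r l j k hk]
  rw [hset, Finset.card_erase_of_mem (by simp [hmem, hj])]
  have hpos : 0 < ((Finset.Icc a b).filter fun k => sig pb p r l k = -1).card :=
    Finset.card_pos.mpr ⟨j, by simp [hmem, hj]⟩
  omega

lemma nP_sub_mem (pb : Fin (n + 1) → ZMod 2) (p : ℕ) (r : ZMod p) (l : Fin (n + 1) → ℤ)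
    (j a b : Fin (n + 1)) (hj : sig pb p r l j = -1) (hmem : j ∈ Finset.Icc a b) :
    nP pb p r (l - eps j) a b = nP pb p r l a b + 1 := by
  classical
  rw [nP_eq, nP_eq]
  have hset : ((Finset.Icc a b).filter fun k => sig pb p r (l - eps j) k = 1) =
      insert j ((Finset.Icc a b).filter fun k => sig pb p r l k = 1) := by
    ext k
    by_cases hk : k = j
    · subst hk
      simp [Finset.mem_filter, hmem, sig_sub_eps_self pb p r l k hj]
    · simp [Finset.mem_filter, Finset.mem_insert, hk, sig_sub_eps pb p r l j k hk]
  rw [hset, Finset.card_insert_of_notMem (by simp [hj])]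

lemma key14 (pb : Fin (n + 1) → ZMod 2) (p : ℕ) (r : ZMod p) (l : Fin (n + 1) → ℤ)
    (j : Fin (n + 1)) (hj : RMinus pb p r l j) (hmin : ∀ k, k < j → ¬ RMinus pb p r l k)
    (k : Fin (n + 1)) : RMinus pb p r (l - eps j) k ↔ RMinus pb p r l k ∧ k ≠ j := by
  have hsigj : sig pb p r l j = -1 := hj.1
  rcases lt_trichotomy k j with hlt | rfl | hgt
  · have hk : k ≠ j := ne_of_lt hlt
    constructor
    · intro h
      exfalso
      apply hmin k hlt
      refine ⟨by rw [← sig_sub_eps pb p r l j k hk]; exact h.1, ?_⟩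
      intro m hm
      by_cases hjm : j ∈ Finset.Icc k m
      · have h1 := nM_sub_mem pb p r l j k m hsigj hjm
        have h2 := nP_sub_mem pb p r l j k m hsigj hjm
        have h3 := h.2 m hm
        omega
      · have h1 := nM_sub_notMem pb p r l j k m hjm
        have h2 := nP_sub_notMem pb p r l j k m hjm
        have h3 := h.2 m hm
        omega
    · rintro ⟨h, -⟩
      exact absurd h (hmin k hlt)
  · constructor
    · intro h
      have hc := h.1
      rw [sig_sub_eps_self pb p r l k hsigj] at hc
      norm_num at hc
    · rintro ⟨-, h⟩
      exact absurd rfl h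
  · have hk : k ≠ j := (ne_of_lt hgt).symm
    have hnot : ∀ m : Fin (n + 1), j ∉ Finset.Icc k m := by
      intro m hm
      exact absurd (Finset.mem_Icc.mp hm).1 (not_le.mpr hgt)
    constructor
    · intro h
      refine ⟨⟨by rw [← sig_sub_eps pb p r l j k hk]; exact h.1, fun m hm => ?_⟩, hk⟩
      have h1 := nM_sub_notMem pb p r l j k m (hnot m)
      have h2 := nP_sub_notMem pb p r l j k m (hnot m)
      have h3 := h.2 m hm
      omega
    · rintro ⟨h, -⟩
      refine ⟨by rw [sig_sub_eps pb p r l j k hk]; exact h.1, fun m hm => ?_⟩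
      have h1 := nM_sub_notMem pb p r l j k m (hnot m)
      have h2 := nP_sub_notMem pb p r l j k m (hnot m)
      have h3 := h.2 m hm
      omega

lemma eStar_eq_some (pb : Fin (n + 1) → ZMod 2) (p : ℕ) (r : ZMod p)
    (l mu : Fin (n + 1) → ℤ) (h : eStar pb p r l = some mu) :
    ∃ j, RMinus pb p r l j ∧ (∀ k, k < j → ¬ RMinus pb p r l k) ∧ mu = l - eps j := by
  classical
  unfold eStar at h
  split_ifs at h with hne
  · refine ⟨(Finset.univ.filter (RMinus pb p r l)).min' hne, ?_, ?_, ?_⟩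
    · exact (Finset.mem_filter.mp (Finset.min'_mem _ hne)).2
    · intro k hk hR
      exact absurd (Finset.min'_le _ k (Finset.mem_filter.mpr ⟨Finset.mem_univ k, hR⟩))
        (not_le.mpr hk)
    · exact (Option.some_inj.mp h).symm

lemma eStar_of_good (pb : Fin (n + 1) → ZMod 2) (p : ℕ) (r : ZMod p)
    (l : Fin (n + 1) → ℤ) (j : Fin (n + 1)) (hj : RMinus pb p r l j)
    (hmin : ∀ k, k < j → ¬ RMinus pb p r l k) :
    eStar pb p r l = some (l - eps j) := by
  classical
  unfold eStar
  split_ifs with hne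
  · have hm : (Finset.univ.filter (RMinus pb p r l)).min' hne = j := by
      apply le_antisymm
      · exact Finset.min'_le _ j (Finset.mem_filter.mpr ⟨Finset.mem_univ j, hj⟩)
      · by_contra hlt
        push_neg at hlt
        exact hmin _ hlt (Finset.mem_filter.mp (Finset.min'_mem _ hne)).2
    rw [hm]
  · exact absurd ⟨j, Finset.mem_filter.mpr ⟨Finset.mem_univ j, hj⟩⟩ hne

open Classical in
lemma forward14 (pb : Fin (n + 1) → ZMod 2) (p : ℕ) (r : ZMod p) (i : Fin (n + 1)) :
    ∀ a : ℕ, ∀ l : Fin (n + 1) → ℤ,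
    (Finset.univ.filter fun k => RMinus pb p r l k ∧ k < i).card = a →
    RMinus pb p r l i →
    ∃ (b : ℕ) (mu : Fin (n + 1) → ℤ),
      (fun o => Option.bind o (eStar pb p r))^[b] (some l) = some mu ∧
      (fun o => Option.bind o (eStar pb p r))^[b + 1] (some l) = some (mu - eps i) := by
  intro a
  induction a with
  | zero =>
    intro l hcard hi
    have hmin : ∀ k, k < i → ¬ RMinus pb p r l k := by
      intro k hk hR
      have hmem : k ∈ Finset.univ.filter fun k => RMinus pb p r l k ∧ k < i :=
        Finset.mem_filter.mpr ⟨Finset.mem_univ k, hR, hk⟩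
      rw [Finset.card_eq_zero] at hcard
      rw [hcard] at hmem
      exact absurd hmem (Finset.notMem_empty k)
    refine ⟨0, l, rfl, ?_⟩
    rw [Function.iterate_succ_apply, Function.iterate_zero_apply]
    exact eStar_of_good pb p r l i hi hmin
  | succ a ih =>
    intro l hcard hi
    have hS : (Finset.univ.filter fun k => RMinus pb p r l k ∧ k < i).Nonempty := by
      rw [← Finset.card_pos, hcard]; omega
    obtain ⟨j0, hj0⟩ := hS
    have hj0R : RMinus pb p r l j0 := (Finset.mem_filter.mp hj0).2.1
    have hj0i : j0 < i := (Finset.mem_filter.mp hj0).2.2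
    have hT : (Finset.univ.filter (RMinus pb p r l)).Nonempty :=
      ⟨j0, Finset.mem_filter.mpr ⟨Finset.mem_univ j0, hj0R⟩⟩
    set j := (Finset.univ.filter (RMinus pb p r l)).min' hT with hjdef
    have hjR : RMinus pb p r l j := (Finset.mem_filter.mp (Finset.min'_mem _ hT)).2
    have hjmin : ∀ k, k < j → ¬ RMinus pb p r l k := by
      intro k hk hR
      exact absurd (Finset.min'_le _ k (Finset.mem_filter.mpr ⟨Finset.mem_univ k, hR⟩))
        (not_le.mpr hk)
    have hji : j < i :=
      lt_of_le_of_lt (Finset.min'_le _ j0 (Finset.mem_filter.mpr ⟨Finset.mem_univ j0, hj0R⟩)) hj0i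
    have hstep : eStar pb p r l = some (l - eps j) := eStar_of_good pb p r l j hjR hjmin
    have hR' : RMinus pb p r (l - eps j) i :=
      (key14 pb p r l j hjR hjmin i).mpr ⟨hi, ne_of_gt hji⟩
    have hcard' : (Finset.univ.filter fun k => RMinus pb p r (l - eps j) k ∧ k < i).card = a := by
      have hset : (Finset.univ.filter fun k => RMinus pb p r (l - eps j) k ∧ k < i) =
          (Finset.univ.filter fun k => RMinus pb p r l k ∧ k < i).erase j := by
        ext k
        simp only [Finset.mem_filter, Finset.mem_erase, Finset.mem_univ, true_and]
        constructor
        · rintro ⟨hk, hki⟩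
          obtain ⟨hkl, hkj⟩ := (key14 pb p r l j hjR hjmin k).mp hk
          exact ⟨hkj, hkl, hki⟩
        · rintro ⟨hkj, hkl, hki⟩
          exact ⟨(key14 pb p r l j hjR hjmin k).mpr ⟨hkl, hkj⟩, hki⟩
      rw [hset, Finset.card_erase_of_mem
        (Finset.mem_filter.mpr ⟨Finset.mem_univ j, hjR, hji⟩), hcard]
      omega
    obtain ⟨b, mu, hb1, hb2⟩ := ih (l - eps j) hcard' hR'
    have hF : Option.bind (some l) (eStar pb p r) = some (l - eps j) := hstep
    refine ⟨b + 1, mu, ?_, ?_⟩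
    · rw [Function.iterate_succ_apply, hF]
      exact hb1
    · rw [Function.iterate_succ_apply, hF]
      exact hb2

lemma backward14 (pb : Fin (n + 1) → ZMod 2) (p : ℕ) (r : ZMod p) (i : Fin (n + 1)) :
    ∀ a : ℕ, ∀ l mu : Fin (n + 1) → ℤ,
    (fun o => Option.bind o (eStar pb p r))^[a] (some l) = some mu →
    RMinus pb p r mu i → RMinus pb p r l i := by
  intro a
  induction a with
  | zero =>
    intro l mu h hR
    rw [Function.iterate_zero_apply] at h
    rw [Option.some_inj.mp h]
    exact hR
  | succ a ih =>
    intro l mu h hR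
    rw [Function.iterate_succ_apply] at h
    cases heq : eStar pb p r l with
    | none =>
      have h2 : Option.bind (some l) (eStar pb p r) = none := heq
      rw [h2, Function.iterate_fixed rfl a] at h
      exact absurd h (by simp)
    | some l' =>
      have h2 : Option.bind (some l) (eStar pb p r) = some l' := heq
      rw [h2] at h
      obtain ⟨j, hjR, hjmin, rfl⟩ := eStar_eq_some pb p r l l' heq
      exact ((key14 pb p r l j hjR hjmin i).mp (ih _ _ h hR)).1

end Aux14

/-- `i` is the position of a `−` in the reduced `r`-signature of `λ` iff
`(ẽ*_r)^{a+1}(λ) = (ẽ*_r)^a(λ) − ε_i` for some `a ≥ 0` with `(ẽ*_r)^a(λ) ≠ 0`. -/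
theorem statement14 (p : ℕ) (hp : p = 0 ∨ p.Prime) (pb : Fin (n + 1) → ZMod 2)
    (lam : Fin (n + 1) → ℤ) (r : ZMod p) (i : Fin (n + 1)) :
    RMinus pb p r lam i ↔
      ∃ (a : ℕ) (mu : Fin (n + 1) → ℤ),
        (fun o => Option.bind o (eStar pb p r))^[a] (some lam) = some mu ∧
          (fun o => Option.bind o (eStar pb p r))^[a + 1] (some lam) = some (mu - eps i) := by
  constructor
  · intro hR
    exact forward14 pb p r i _ lam rfl hR
  · rintro ⟨a, mu, h1, h2⟩
    rw [Function.iterate_succ_apply', h1] at h2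
    have h2' : eStar pb p r mu = some (mu - eps i) := h2
    obtain ⟨j, hjR, hjmin, heq⟩ := eStar_eq_some pb p r mu _ h2'
    have hji : j = i := by
      have h3 := congrFun heq j
      simp only [Pi.sub_apply, eps] at h3
      by_cases hc : j = i
      · exact hc
      · rw [if_neg hc, if_pos trivial] at h3
        omega
    subst hji
    exact backward14 pb p r j a lam mu h1 hjR

end Kujawa
end

section
/- For every λ ∈ ℤ^N: wt′(s_i(λ)) = wt(λ) in P; moreover, if s′_i : ℤ^N → ℤ^N denotes the map defined by the same formula as s_i but with respect to the parity sequence p̄′ (whose swap at positions i, i+1 returns p̄), then s′_i(s_i(λ)) = λ, so s_i is a bijection. -/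
namespace Kujawa

open Finset

variable {n : ℕ}

lemma sum_pair_eq {M : Type*} [AddCommMonoid M] {i j : Fin (n + 1)} (hij : i ≠ j)
    {F G : Fin (n + 1) → M} (h : ∀ k, k ≠ i → k ≠ j → F k = G k)
    (hpair : F i + F j = G i + G j) : ∑ k, F k = ∑ k, G k := by
  have key : ∀ H : Fin (n + 1) → M,
      ∑ k, H k = H i + H j + ∑ k ∈ (Finset.univ.erase i).erase j, H k := by
    intro H
    rw [add_assoc, Finset.add_sum_erase _ H (Finset.mem_erase.mpr ⟨hij.symm, Finset.mem_univ j⟩),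
      Finset.add_sum_erase _ H (Finset.mem_univ i)]
  rw [key F, key G, hpair]
  congr 1
  refine Finset.sum_congr rfl fun k hk => ?_
  simp only [Finset.mem_erase] at hk
  exact h k hk.2.1 hk.1

lemma gammaP_shift (p : ℕ) (hp : p ≠ 0) (Y k c : ℤ) :
    gammaP p (Y + (p : ℤ) * k) - gammaP p Y
      = gammaP p (Y + (p : ℤ) * k + c) - gammaP p (Y + c) := by
  have hp' : (p : ℤ) ≠ 0 := Int.natCast_ne_zero.mpr hp
  have h1 : Y + (p : ℤ) * k - 1 = (Y - 1) + k * (p : ℤ) := by ring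
  have h2 : Y + (p : ℤ) * k + c - 1 = (Y + c - 1) + k * (p : ℤ) := by ring
  simp only [gammaP, h1, h2, Int.add_mul_emod_self_right, Int.add_mul_ediv_right _ _ hp']
  module

set_option maxHeartbeats 2000000 in
lemma wt_aux {M : Type*} [AddCommGroup M] [Module ℤ M] (g : ℤ → M) (p : ℕ)
    (pb : Fin (n + 1) → ZMod 2) (i : Fin (n + 1)) (hi : (i : ℕ) < n)
    (hpar : pb i + pb (i + 1) = 1) (lam : Fin (n + 1) → ℤ)
    (hg : ∀ X Y c : ℤ, ((X - Y : ℤ) : ZMod p) = 0 → g X - g Y = g (X + c) - g (Y + c)) :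
    ∑ k, sg (pbSwap pb i) k • g (sg (pbSwap pb i) k * (sI pb p i lam k + rho (pbSwap pb i) k))
      = ∑ k, sg pb k • g (sg pb k * (lam k + rho pb k)) := by
  have hv : ((i + 1 : Fin (n + 1)) : ℕ) = (i : ℕ) + 1 :=
    Fin.val_add_one_of_lt (by rwa [Fin.lt_def])
  have hne : (i + 1 : Fin (n + 1)) ≠ i := by
    rw [Fin.ne_iff_vne, hv]; omega
  have hne' : i ≠ i + 1 := hne.symm
  have h01 : ∀ x : ZMod 2, x = 0 ∨ x = 1 := by decide
  have hcases : (pb i = 0 ∧ pb (i + 1) = 1) ∨ (pb i = 1 ∧ pb (i + 1) = 0) := by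
    rcases h01 (pb i) with h | h <;> rcases h01 (pb (i + 1)) with h' | h' <;>
      rw [h, h'] at hpar ⊢ <;> revert hpar <;> decide
  have hst : sg pb (i + 1) = - sg pb i := by
    rcases hcases with ⟨h1, h2⟩ | ⟨h1, h2⟩ <;> simp [sg, h1, h2]
  have hmul : sg pb i * sg pb (i + 1) = -1 := by
    rcases hcases with ⟨h1, h2⟩ | ⟨h1, h2⟩ <;> simp [sg, h1, h2]
  have hsg_i : sg (pbSwap pb i) i = sg pb (i + 1) := by simp [sg, pbSwap]
  have hsg_i1 : sg (pbSwap pb i) (i + 1) = sg pb i := by simp [sg, pbSwap, hne]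
  have hsg_ne : ∀ k, k ≠ i → k ≠ i + 1 → sg (pbSwap pb i) k = sg pb k := by
    intro k h1 h2; simp [sg, pbSwap, h1, h2]
  have hIoi : Finset.Ioi i = insert (i + 1) (Finset.Ioi (i + 1)) := by
    ext m
    simp only [Finset.mem_Ioi, Finset.mem_insert, Fin.lt_def, hv, Fin.ext_iff]
    omega
  have hIoi_ne : ∀ m ∈ Finset.Ioi (i + 1), m ≠ i ∧ m ≠ i + 1 := by
    intro m hm
    rw [Finset.mem_Ioi, Fin.lt_def, hv] at hm
    constructor <;> (rw [Fin.ne_iff_vne]; omega)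
  have hnotmem : (i + 1 : Fin (n + 1)) ∉ Finset.Ioi (i + 1) := by simp
  obtain ⟨S, hS⟩ : ∃ S : ℤ, ∑ m ∈ Finset.Ioi (i + 1), sg pb m = S := ⟨_, rfl⟩
  have htheta_i1 : theta pb (i + 1) = S * sg pb (i + 1) := by
    rw [theta, ← Finset.sum_mul, hS]
  have htheta_i : theta pb i = sg pb (i + 1) * sg pb i + S * sg pb i := by
    rw [theta, hIoi, Finset.sum_insert hnotmem, ← Finset.sum_mul, hS]
  have hsum_swap : ∀ c : ℤ, ∑ m ∈ Finset.Ioi (i + 1), sg (pbSwap pb i) m * c = S * c := by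
    intro c
    rw [← Finset.sum_mul, ← hS]
    congr 1
    refine Finset.sum_congr rfl fun m hm => ?_
    exact hsg_ne m (hIoi_ne m hm).1 (hIoi_ne m hm).2
  have htheta'_i : theta (pbSwap pb i) i = sg pb i * sg pb (i + 1) + S * sg pb (i + 1) := by
    rw [theta, hIoi, Finset.sum_insert hnotmem, hsg_i, hsg_i1, hsum_swap]
  have htheta'_i1 : theta (pbSwap pb i) (i + 1) = S * sg pb i := by
    rw [theta, hsg_i1, hsum_swap]
  have htheta'_ne : ∀ k, k ≠ i → k ≠ i + 1 → theta (pbSwap pb i) k = theta pb k := by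
    intro k hk1 hk2
    rw [theta, theta, hsg_ne k hk1 hk2]
    refine Finset.sum_equiv (Equiv.swap i (i + 1)) ?_ ?_
    · intro m
      simp only [Finset.mem_Ioi]
      by_cases h1 : m = i
      · subst h1
        rw [Equiv.swap_apply_left, Fin.lt_def, Fin.lt_def, hv]
        rw [Fin.ne_iff_vne] at hk1
        omega
      · by_cases h2 : m = i + 1
        · subst h2
          rw [Equiv.swap_apply_right, Fin.lt_def, Fin.lt_def, hv]
          rw [Fin.ne_iff_vne] at hk1
          omega
        · rw [Equiv.swap_apply_of_ne_of_ne h1 h2]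
    · intro m _
      by_cases h1 : m = i
      · subst h1; rw [Equiv.swap_apply_left, hsg_i]
      · by_cases h2 : m = i + 1
        · subst h2; rw [Equiv.swap_apply_right, hsg_i1]
        · rw [Equiv.swap_apply_of_ne_of_ne h1 h2, hsg_ne m h1 h2]
  have hpb'_i : pbSwap pb i i = pb (i + 1) := by simp [pbSwap]
  have hpb'_i1 : pbSwap pb i (i + 1) = pb i := by simp [pbSwap, hne]
  have hrho'_ne : ∀ k, k ≠ i → k ≠ i + 1 → rho (pbSwap pb i) k = rho pb k := by
    intro k h1 h2
    rw [rho, rho, htheta'_ne k h1 h2]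
    simp [pbSwap, h1, h2]
  have hrho'_i : rho (pbSwap pb i) i = rho pb (i + 1) - 1 := by
    rw [rho, rho, htheta'_i, htheta_i1, hpb'_i, hmul]; ring
  have hrho'_i1 : rho (pbSwap pb i) (i + 1) = rho pb i + 1 := by
    rw [rho, rho, htheta'_i1, htheta_i, hpb'_i1, mul_comm (sg pb (i + 1)) (sg pb i), hmul]; ring
  have hkey : sg pb i * rho pb i = sg pb (i + 1) * rho pb (i + 1) := by
    rw [rho, rho, htheta_i, htheta_i1]
    rcases hcases with ⟨h1, h2⟩ | ⟨h1, h2⟩ <;> simp [sg, h1, h2]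
  refine sum_pair_eq hne ?_ ?_
  · intro k hk1 hk2
    beta_reduce
    have hsI : sI pb p i lam k = lam k := by
      unfold sI swapL
      split <;> simp [eps, hk1, hk2]
    rw [hsI, hsg_ne k hk2 hk1, hrho'_ne k hk2 hk1]
  · beta_reduce
    rw [hsg_i, hsg_i1, hrho'_i, hrho'_i1]
    by_cases hc : ((sg pb i * lam i - sg pb (i + 1) * lam (i + 1) : ℤ) : ZMod p) = 0
    · have h1 : sI pb p i lam (i + 1) = lam i := by
        rw [sI, if_pos hc]; simp [swapL, hne]
      have h2 : sI pb p i lam i = lam (i + 1) := by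
        rw [sI, if_pos hc]; simp [swapL]
      rw [hst] at hc hkey
      rw [h1, h2, hst]
      have hXY : ((sg pb i * (lam i + rho pb i)
          - (-sg pb i) * (lam (i + 1) + rho pb (i + 1)) : ℤ) : ZMod p) = 0 := by
        have e : (sg pb i * (lam i + rho pb i)
            - (-sg pb i) * (lam (i + 1) + rho pb (i + 1)) : ℤ)
            = sg pb i * lam i - (-sg pb i) * lam (i + 1) := by linear_combination hkey
        rw [e]; exact hc
      have hgs := hg _ _ (sg pb i) hXY
      have a1 : sg pb i * (lam i + (rho pb i + 1))
          = sg pb i * (lam i + rho pb i) + sg pb i := by ring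
      have a2 : -sg pb i * (lam (i + 1) + (rho pb (i + 1) - 1))
          = (-sg pb i) * (lam (i + 1) + rho pb (i + 1)) + sg pb i := by ring
      rw [a1, a2]
      simp only [← Int.cast_smul_eq_zsmul ℤ, Int.cast_neg]
      rw [neg_smul, neg_smul, ← sub_eq_add_neg, ← smul_sub, ← hgs, smul_sub]
      abel
    · have h1 : sI pb p i lam (i + 1) = lam i - 1 := by
        rw [sI, if_neg hc]
        simp [swapL, eps, hne]
      have h2 : sI pb p i lam i = lam (i + 1) + 1 := by
        rw [sI, if_neg hc]
        simp [swapL, eps, hne']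
      rw [h1, h2]
      have a1 : sg pb i * (lam i - 1 + (rho pb i + 1)) = sg pb i * (lam i + rho pb i) := by ring
      have a2 : sg pb (i + 1) * (lam (i + 1) + 1 + (rho pb (i + 1) - 1))
          = sg pb (i + 1) * (lam (i + 1) + rho pb (i + 1)) := by ring
      rw [a1, a2, add_comm]

set_option maxHeartbeats 1000000 in
lemma sI_invol (p : ℕ) (pb : Fin (n + 1) → ZMod 2) (i : Fin (n + 1)) (hi : (i : ℕ) < n)
    (hpar : pb i + pb (i + 1) = 1) (lam : Fin (n + 1) → ℤ) :
    sI (pbSwap pb i) p i (sI pb p i lam) = lam := by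
  have hv : ((i + 1 : Fin (n + 1)) : ℕ) = (i : ℕ) + 1 :=
    Fin.val_add_one_of_lt (by rwa [Fin.lt_def])
  have hne : (i + 1 : Fin (n + 1)) ≠ i := by
    rw [Fin.ne_iff_vne, hv]; omega
  have hne' : i ≠ i + 1 := hne.symm
  have h01 : ∀ x : ZMod 2, x = 0 ∨ x = 1 := by decide
  have hcases : (pb i = 0 ∧ pb (i + 1) = 1) ∨ (pb i = 1 ∧ pb (i + 1) = 0) := by
    rcases h01 (pb i) with h | h <;> rcases h01 (pb (i + 1)) with h' | h' <;>
      rw [h, h'] at hpar ⊢ <;> revert hpar <;> decide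
  have hst : sg pb (i + 1) = - sg pb i := by
    rcases hcases with ⟨h1, h2⟩ | ⟨h1, h2⟩ <;> simp [sg, h1, h2]
  have hsg_i : sg (pbSwap pb i) i = sg pb (i + 1) := by simp [sg, pbSwap]
  have hsg_i1 : sg (pbSwap pb i) (i + 1) = sg pb i := by simp [sg, pbSwap, hne]
  by_cases hc : ((sg pb i * lam i - sg pb (i + 1) * lam (i + 1) : ℤ) : ZMod p) = 0
  · have hμ : sI pb p i lam = swapL i lam := by rw [sI, if_pos hc]
    rw [hμ]
    have hb : swapL i lam i = lam (i + 1) := by simp [swapL]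
    have ha : swapL i lam (i + 1) = lam i := by simp [swapL, hne]
    have hc' : ((sg (pbSwap pb i) i * swapL i lam i
        - sg (pbSwap pb i) (i + 1) * swapL i lam (i + 1) : ℤ) : ZMod p) = 0 := by
      rw [hsg_i, hsg_i1, hb, ha]
      have e : (sg pb (i + 1) * lam (i + 1) - sg pb i * lam i : ℤ)
          = -(sg pb i * lam i - sg pb (i + 1) * lam (i + 1)) := by ring
      rw [e, Int.cast_neg, hc, neg_zero]
    rw [sI, if_pos hc']
    funext k
    by_cases hk : k = i
    · subst hk; simp [swapL, hne]
    · by_cases hk2 : k = i + 1 <;> simp [swapL, hk, hk2, hne]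
  · have hμ : sI pb p i lam = swapL i lam + eps i - eps (i + 1) := by rw [sI, if_neg hc]
    rw [hμ]
    have hb : (swapL i lam + eps i - eps (i + 1) : Fin (n + 1) → ℤ) i = lam (i + 1) + 1 := by
      simp [swapL, eps, hne']
    have ha : (swapL i lam + eps i - eps (i + 1) : Fin (n + 1) → ℤ) (i + 1) = lam i - 1 := by
      simp [swapL, eps, hne, hne']
    have hc' : ¬ ((sg (pbSwap pb i) i * (swapL i lam + eps i - eps (i + 1) : Fin (n + 1) → ℤ) i
        - sg (pbSwap pb i) (i + 1) *
          (swapL i lam + eps i - eps (i + 1) : Fin (n + 1) → ℤ) (i + 1) : ℤ)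
          : ZMod p) = 0 := by
      rw [hsg_i, hsg_i1, hb, ha]
      intro h
      apply hc
      have e : (sg pb i * lam i - sg pb (i + 1) * lam (i + 1) : ℤ)
          = -(sg pb (i + 1) * (lam (i + 1) + 1) - sg pb i * (lam i - 1)) := by
        rw [hst]; ring
      rw [e, Int.cast_neg, h, neg_zero]
    rw [sI, if_neg hc']
    funext k
    by_cases hk : k = i
    · subst hk
      simp [swapL, eps, hne, hne']
    · by_cases hk2 : k = i + 1
      · subst hk2
        simp [swapL, eps, hne, hne']
      · simp [swapL, eps, hk, hk2]
/-- `wt′(s_i(λ)) = wt(λ)` in `P` (in the `p = 0` setting and in the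
prime-`p` setting), and `s′_i(s_i(λ)) = λ`, so `s_i` is a bijection. -/
theorem statement19 (p : ℕ) (hp : p = 0 ∨ p.Prime) (pb : Fin (n + 1) → ZMod 2)
    (i : Fin (n + 1)) (hi : (i : ℕ) < n) (hpar : pb i + pb (i + 1) = 1)
    (lam : Fin (n + 1) → ℤ) :
    (p = 0 → wt0 (pbSwap pb i) (sI pb p i lam) = wt0 pb lam) ∧
      (p.Prime → wtP p (pbSwap pb i) (sI pb p i lam) = wtP p pb lam) ∧
      sI (pbSwap pb i) p i (sI pb p i lam) = lam := by
  refine ⟨?_, ?_, sI_invol p pb i hi hpar lam⟩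
  · intro hp0
    subst hp0
    unfold wt0
    refine wt_aux gamma0 0 pb i hi hpar lam ?_
    intro X Y c h
    have hd : ((0 : ℕ) : ℤ) ∣ X - Y := (CharP.intCast_eq_zero_iff (ZMod 0) 0 _).mp h
    have hXY : X = Y := by
      rw [Nat.cast_zero, zero_dvd_iff, sub_eq_zero] at hd
      exact hd
    rw [hXY]
    simp
  · intro hpp
    unfold wtP
    refine wt_aux (gammaP p) p pb i hi hpar lam ?_
    intro X Y c h
    have hd : ((p : ℕ) : ℤ) ∣ X - Y := (CharP.intCast_eq_zero_iff (ZMod p) p _).mp h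
    obtain ⟨k, hk⟩ := hd
    have hX : X = Y + (p : ℤ) * k := by linarith
    rw [hX]
    exact gammaP_shift p hpp.ne_zero Y k c

end Kujawa
end
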